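/- Let A be a skew brace. The additive subgroup A*A generated by { a*b : a,b ∈ A }, where a*b = -a + a∘b - b, is an ideal of A, and the quotient skew brace A/(A*A) satisfies x + y = x ∘ y for all x,y (i.e., is a group). Moreover, if I is any ideal of A such that A/I satisfies x + y = x ∘ y, then A*A ⊆ I. -/

import Mathlib

/-- A skew brace: a type with an additive group structure and a second group
operation `circ` (with inverse `cinv` and the same identity `0`) satisfying the
skew brace compatibility law `a ∘ (b + c) = a ∘ b - a + a ∘ c`. -/
class SkewBrace (A : Type*) extends AddGroup A where
  circ : A → A → A
  cinv : A → A
  circ_assoc : ∀ a b c : A, circ (circ a b) c = circ a (circ b c)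
  zero_circ : ∀ a : A, circ 0 a = a
  circ_zero : ∀ a : A, circ a 0 = a
  cinv_circ : ∀ a : A, circ (cinv a) a = 0
  circ_cinv : ∀ a : A, circ a (cinv a) = 0
  compat : ∀ a b c : A, circ a (b + c) = circ a b - a + circ a c

namespace SkewBrace

variable {A : Type*} [SkewBrace A]

/-- The star operation `a * b = -a + a ∘ b - b`. -/
def star (a b : A) : A := -a + circ a b - b

/-- The right distributor `[a,b,c] = (a+b)∘c - b∘c + c - a∘c`. -/
def rd (a b c : A) : A := circ (a + b) c - circ b c + c - circ a c

/-- An ideal of a skew brace: a normal additive subgroup closed under the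
star operation on both sides. -/
def IsIdeal (I : AddSubgroup A) : Prop :=
  (∀ a : A, ∀ x ∈ I, a + x - a ∈ I) ∧
  (∀ a : A, ∀ x ∈ I, star a x ∈ I) ∧
  (∀ a : A, ∀ x ∈ I, star x a ∈ I)

/-- `Z_R(A)`: additively central elements annihilating all right distributors. -/
def ZR (A : Type*) [SkewBrace A] : Set A :=
  {z | (∀ a : A, z + a = a + z) ∧ ∀ b c : A, rd z b c = 0 ∧ rd b z c = 0 ∧ rd b c z = 0}

end SkewBrace

open SkewBrace


-- Key identity: the conjugate of a star element is a difference of stars,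
-- coming from `star a (b + c) = star a b + (b + star a c - b)`.
lemma star_conj {A : Type*} [SkewBrace A] (a b c : A) :
    b + star a c - b = -(star a b) + star a (b + c) := by
  simp only [SkewBrace.star, SkewBrace.compat, sub_eq_add_neg, neg_add_rev, neg_neg, add_assoc,
    neg_add_cancel_left, add_neg_cancel_left, neg_add_cancel, add_neg_cancel, add_zero]

theorem stmt15 {A : Type*} [SkewBrace A]
    (J : AddSubgroup A)
    (hJ : J = AddSubgroup.closure {x : A | ∃ a b : A, x = star a b}) :
    IsIdeal J ∧
    (∀ x y : A, x + y - SkewBrace.circ x y ∈ J) ∧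
    (∀ I : AddSubgroup A, IsIdeal I →
      (∀ x y : A, x + y - SkewBrace.circ x y ∈ I) → J ≤ I) := by
  have hS : ∀ a b : A, star a b ∈ J := by
    intro a b; rw [hJ]; exact AddSubgroup.subset_closure ⟨a, b, rfl⟩
  have hnorm : ∀ a : A, ∀ x ∈ J, a + x - a ∈ J := by
    intro a x hx
    rw [hJ] at hx
    induction hx using AddSubgroup.closure_induction with
    | mem y hy =>
        obtain ⟨u, v, rfl⟩ := hy
        rw [star_conj]
        exact J.add_mem (J.neg_mem (hS u a)) (hS u (a + v))
    | zero => simpa using J.zero_mem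
    | add y z _ _ hy hz =>
        have : a + (y + z) - a = (a + y - a) + (a + z - a) := by
          simp [sub_eq_add_neg, add_assoc]
        rw [this]; exact J.add_mem hy hz
    | neg y _ hy =>
        have : a + (-y) - a = -(a + y - a) := by
          simp [sub_eq_add_neg, add_assoc]
        rw [this]; exact J.neg_mem hy
  have key : ∀ x y : A, x + y - SkewBrace.circ x y ∈ J := by
    intro x y
    have h : x + y - SkewBrace.circ x y = x + (-(star x y)) - x := by
      simp only [SkewBrace.star, sub_eq_add_neg, neg_add_rev, neg_neg, add_assoc,
        neg_add_cancel_left, add_neg_cancel_left, neg_add_cancel, add_neg_cancel, add_zero]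
    rw [h]; exact hnorm x _ (J.neg_mem (hS x y))
  have hstar : ∀ a x : A, star a x ∈ J := by
    intro a x
    have h1 : -(a + x - SkewBrace.circ a x) ∈ J := J.neg_mem (key a x)
    have h2 := hnorm (-a) _ h1
    have h : -a + (-(a + x - SkewBrace.circ a x)) - (-a) = star a x := by
      simp only [SkewBrace.star, sub_eq_add_neg, neg_add_rev, neg_neg, add_assoc,
        neg_add_cancel_left, add_neg_cancel_left, neg_add_cancel, add_neg_cancel, add_zero]
    rwa [h] at h2
  refine ⟨⟨hnorm, fun a x _ => hstar a x, fun a x _ => hstar x a⟩, key, ?_⟩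
  intro I hI hIc
  rw [hJ]
  apply AddSubgroup.closure_le I |>.mpr
  rintro y ⟨a, b, rfl⟩
  have h1 : -(a + b - SkewBrace.circ a b) ∈ I := I.neg_mem (hIc a b)
  have h2 := hI.1 (-a) _ h1
  have h : -a + (-(a + b - SkewBrace.circ a b)) - (-a) = star a b := by
    simp only [SkewBrace.star, sub_eq_add_neg, neg_add_rev, neg_neg, add_assoc,
      neg_add_cancel_left, add_neg_cancel_left, neg_add_cancel, add_neg_cancel, add_zero]
  rwa [h] at h2
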